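/- Let F be a finite field, let n ≥ 2, and let R = M_n(F) be the ring of n×n matrices over F. Let U be a subgroup of GL_n(F) with -I_n ∈ U such that the Cayley graph Γ(R,U) is connected, and let S ⊆ R be a nonempty subset with 0 ∉ S and U S U = S. Then the Cayley graph Γ(R,S) is connected. -/

import Mathlib

/-- The Cayley graph `Γ(R,S)` of a ring `R` with connection set `S`. -/
def cayleyGraph {R : Type*} [Ring R] (S : Set R) : SimpleGraph R :=
  SimpleGraph.fromRel (fun a b => a - b ∈ S)

/-- The image in `R` of a subgroup `U` of the unit group `Rˣ`. -/
def unitsSet (R : Type*) [Ring R] (U : Subgroup Rˣ) : Set R :=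
  (fun u : Rˣ => (u : R)) '' (U : Set Rˣ)

lemma sub_mem_closure_of_reachable {R : Type*} [Ring R] {S : Set R} {a b : R}
    (h : (cayleyGraph S).Reachable a b) : b - a ∈ AddSubgroup.closure S := by
  obtain ⟨w⟩ := h
  induction w with
  | nil => simpa using zero_mem (AddSubgroup.closure S)
  | @cons a c b hadj p ih =>
    rw [cayleyGraph, SimpleGraph.fromRel_adj] at hadj
    have hca : c - a ∈ AddSubgroup.closure S := by
      rcases hadj.2 with h' | h'
      · have := AddSubgroup.subset_closure (k := S) h'
        simpa using neg_mem this
      · exact AddSubgroup.subset_closure h'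
    have heq : b - a = (b - c) + (c - a) := by abel
    rw [heq]
    exact add_mem ih hca

lemma closure_top_of_connected {R : Type*} [Ring R] {S : Set R}
    (h : (cayleyGraph S).Connected) : AddSubgroup.closure S = ⊤ := by
  rw [eq_top_iff]
  intro r _
  have := sub_mem_closure_of_reachable (h.preconnected 0 r)
  simpa using this

lemma connected_of_closure_top {R : Type*} [Ring R] {S : Set R}
    (h : AddSubgroup.closure S = ⊤) : (cayleyGraph S).Connected := by
  have key : ∀ x ∈ AddSubgroup.closure S, ∀ a : R,
      (cayleyGraph S).Reachable a (a + x) := by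
    intro x hx
    induction hx using AddSubgroup.closure_induction with
    | mem s hs =>
      intro a
      by_cases hs0 : s = 0
      · subst hs0; rw [add_zero]
      · have hadj : (cayleyGraph S).Adj (a + s) a := by
          rw [cayleyGraph, SimpleGraph.fromRel_adj]
          constructor
          · simpa using hs0
          · left; simpa using hs
        exact (hadj.reachable).symm
    | zero => intro a; rw [add_zero]
    | add x y hx hy ihx ihy =>
      intro a
      have := (ihx a).trans (ihy (a + x))
      rwa [add_assoc] at this
    | neg x hx ihx =>
      intro a
      have h1 := (ihx (a - x)).symm
      have h2 : a - x + x = a := by abel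
      rw [h2] at h1
      have h3 : a + -x = a - x := by abel
      rwa [h3]
  refine ⟨fun a b => ?_⟩
  have h1 := key (b - a) (h ▸ AddSubgroup.mem_top _) a
  have h2 : a + (b - a) = b := by abel
  rwa [h2] at h1

theorem stmt1 {F : Type*} [Field F] [Fintype F] {n : ℕ} (hn : 2 ≤ n)
    (U : Subgroup (Matrix (Fin n) (Fin n) F)ˣ) (hU : -1 ∈ U)
    (hconnU : (cayleyGraph (unitsSet (Matrix (Fin n) (Fin n) F) U)).Connected)
    (S : Set (Matrix (Fin n) (Fin n) F)) (hSne : S.Nonempty)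
    (h0 : (0 : Matrix (Fin n) (Fin n) F) ∉ S)
    (hstab : ∀ u₁ ∈ U, ∀ u₂ ∈ U, ∀ s ∈ S,
      ((u₁ : (Matrix (Fin n) (Fin n) F)ˣ) : Matrix (Fin n) (Fin n) F) * s *
        ((u₂ : (Matrix (Fin n) (Fin n) F)ˣ) : Matrix (Fin n) (Fin n) F) ∈ S) :
    (cayleyGraph S).Connected := by
  haveI : Nonempty (Fin n) := ⟨⟨0, by omega⟩⟩
  -- `A` is the additive closure of `S`; it is stable under multiplication by `U`
  have hstabA : ∀ u ∈ unitsSet (Matrix (Fin n) (Fin n) F) U,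
      ∀ a ∈ AddSubgroup.closure S, u * a ∈ AddSubgroup.closure S ∧
        a * u ∈ AddSubgroup.closure S := by
    rintro _ ⟨u, huU, rfl⟩ a ha
    induction ha using AddSubgroup.closure_induction with
    | mem s hs =>
      constructor
      · have := hstab u huU 1 (one_mem U) s hs
        simpa using AddSubgroup.subset_closure this
      · have := hstab 1 (one_mem U) u huU s hs
        simpa using AddSubgroup.subset_closure this
    | zero => constructor <;> simpa using zero_mem _
    | add x y hx hy ihx ihy =>
      exact ⟨by rw [mul_add]; exact add_mem ihx.1 ihy.1,
        by rw [add_mul]; exact add_mem ihx.2 ihy.2⟩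
    | neg x hx ihx =>
      exact ⟨by rw [mul_neg]; exact neg_mem ihx.1,
        by rw [neg_mul]; exact neg_mem ihx.2⟩
  have hUtop : AddSubgroup.closure (unitsSet (Matrix (Fin n) (Fin n) F) U) = ⊤ :=
    closure_top_of_connected hconnU
  -- hence stable under multiplication by any element
  have hmulA : ∀ r : Matrix (Fin n) (Fin n) F, ∀ a ∈ AddSubgroup.closure S,
      r * a ∈ AddSubgroup.closure S ∧ a * r ∈ AddSubgroup.closure S := by
    intro r
    have hr : r ∈ AddSubgroup.closure (unitsSet (Matrix (Fin n) (Fin n) F) U) :=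
      hUtop ▸ AddSubgroup.mem_top _
    induction hr using AddSubgroup.closure_induction with
    | mem u hu => exact fun a ha => hstabA u hu a ha
    | zero => intro a ha; constructor <;> simpa using zero_mem _
    | add x y hx hy ihx ihy =>
      intro a ha
      exact ⟨by rw [add_mul]; exact add_mem ((ihx a ha).1) ((ihy a ha).1),
        by rw [mul_add]; exact add_mem ((ihx a ha).2) ((ihy a ha).2)⟩
    | neg x hx ihx =>
      intro a ha
      exact ⟨by rw [neg_mul]; exact neg_mem ((ihx a ha).1),
        by rw [mul_neg]; exact neg_mem ((ihx a ha).2)⟩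
  -- the closure of `S` is a two-sided ideal
  let I : TwoSidedIdeal (Matrix (Fin n) (Fin n) F) :=
    TwoSidedIdeal.mk' ((AddSubgroup.closure S : AddSubgroup (Matrix (Fin n) (Fin n) F)) :
        Set (Matrix (Fin n) (Fin n) F)) (zero_mem _)
      (fun hx hy => add_mem hx hy) (fun hx => neg_mem hx)
      (fun {x y} hy => (hmulA x y hy).1) (fun {x y} hx => (hmulA y x hx).2)
  obtain ⟨s, hs⟩ := hSne
  have hs0 : s ≠ 0 := fun h => h0 (h ▸ hs)
  have hsI : s ∈ I := by
    rw [TwoSidedIdeal.mem_mk']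
    exact AddSubgroup.subset_closure hs
  have h1I : (1 : Matrix (Fin n) (Fin n) F) ∈ I :=
    IsSimpleRing.one_mem_of_ne_zero_mem I hs0 hsI
  have hAtop : AddSubgroup.closure S = ⊤ := by
    rw [eq_top_iff]
    intro r _
    have hrI : r ∈ I := by
      have := I.mul_mem_left r 1 h1I
      simpa using this
    rwa [TwoSidedIdeal.mem_mk'] at hrI
  exact connected_of_closure_top hAtop
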